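/- Fix τ ∈ ℍ, z ∈ ℂ, and a ∈ ℂ, with z ∉ ℤ+τℤ, 2z ∉ ℤ+τℤ, and (a+1)z ∉ ℤ+τℤ. Define F₂(t) = [θ(t+z)θ'(0)/(θ(t)θ(z))]² · [θ(t−z)θ'(0)/(θ(t)θ(−z))] · [θ(−t+2z)θ(z)/(θ(−t+z)θ(2z))] · [θ(t+(a+1)z)θ(z)/(θ(t+z)θ((a+1)z))] · [θ(t−(a+1)z)θ(z)/(θ(t−z)θ((a+1)z))], defined wherever all denominators are nonzero. Then F₂ is doubly periodic with respect to the lattice ℤ+τℤ: F₂(t+1) = F₂(t) and F₂(t+τ) = F₂(t) whenever both sides are defined. -/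

import Mathlib

open Complex Topology Filter

/-- `q = e^{2πiτ}`. -/
noncomputable def jq (τ : ℂ) : ℂ := Complex.exp (2 * Real.pi * I * τ)

/-- The Jacobi theta function
`θ(t,τ) = q^{1/8} · 2 sin(πt) · ∏_{n≥1}(1−qⁿ) · ∏_{n≥1}(1−qⁿe^{2πit})(1−qⁿe^{−2πit})`,
where `q^{1/8} = e^{πiτ/4}`. -/
noncomputable def jTheta (t τ : ℂ) : ℂ :=
  Complex.exp (Real.pi * I * τ / 4) * (2 * Complex.sin (Real.pi * t)) *
    (∏' n : ℕ, (1 - jq τ ^ (n + 1))) *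
    (∏' n : ℕ, (1 - jq τ ^ (n + 1) * Complex.exp (2 * Real.pi * I * t)) *
      (1 - jq τ ^ (n + 1) * Complex.exp (-(2 * Real.pi * I * t))))

/-- `θ(t)` with `τ` fixed. -/
noncomputable def th (τ t : ℂ) : ℂ := jTheta t τ

/-- `θ'(0)`, the derivative of `θ(·,τ)` at `t = 0`. -/
noncomputable def thd (τ : ℂ) : ℂ := deriv (fun t => jTheta t τ) 0

/-- Membership in the lattice `ℤ + τℤ`. -/
def inLat (τ t : ℂ) : Prop := ∃ m n : ℤ, t = (m : ℂ) + (n : ℂ) * τ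

/-- The function `F₂` arising in Case 2 of the proof of birational invariance:
`F₂(t) = [θ(t+z)θ'(0)/(θ(t)θ(z))]²·[θ(t−z)θ'(0)/(θ(t)θ(−z))]·
[θ(−t+2z)θ(z)/(θ(−t+z)θ(2z))]·[θ(t+(a+1)z)θ(z)/(θ(t+z)θ((a+1)z))]·
[θ(t−(a+1)z)θ(z)/(θ(t−z)θ((a+1)z))]`. -/
noncomputable def F₂ (τ z a t : ℂ) : ℂ :=
  (th τ (t + z) * thd τ / (th τ t * th τ z)) ^ 2 *
  (th τ (t - z) * thd τ / (th τ t * th τ (-z))) *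
  (th τ (-t + 2 * z) * th τ z / (th τ (-t + z) * th τ (2 * z))) *
  (th τ (t + (a + 1) * z) * th τ z / (th τ (t + z) * th τ ((a + 1) * z))) *
  (th τ (t - (a + 1) * z) * th τ z / (th τ (t - z) * th τ ((a + 1) * z)))

/- ### Auxiliary lemmas -/

lemma mult_geom {q : ℂ} (hq : ‖q‖ < 1) (c : ℂ) :
    Multipliable (fun n : ℕ => 1 - c * q ^ n) := by
  by_cases hz : ∃ N : ℕ, 1 - c * q ^ N = 0
  · obtain ⟨N, hN⟩ := hz
    refine ⟨0, ?_⟩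
    rw [HasProd]
    refine Tendsto.congr' ?_ tendsto_const_nhds
    filter_upwards [Filter.eventually_ge_atTop ({N} : Finset ℕ)] with s hs
    exact (Finset.prod_eq_zero (hs (Finset.mem_singleton_self N)) hN).symm
  · push_neg at hz
    have hlog : Summable (fun n : ℕ => Complex.log (1 - c * q ^ n)) := by
      have hgeo : Summable (fun n : ℕ => (3/2 : ℝ) * (‖c‖ * ‖q‖ ^ n)) := by
        refine Summable.mul_left _ (Summable.mul_left _ ?_)
        exact summable_geometric_of_lt_one (norm_nonneg q) hq
      refine Summable.of_norm_bounded_eventually_nat hgeo ?_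
      have h0 : Filter.Tendsto (fun n : ℕ => ‖c‖ * ‖q‖ ^ n) atTop (nhds 0) := by
        simpa using (tendsto_pow_atTop_nhds_zero_of_lt_one (norm_nonneg q) hq).const_mul ‖c‖
      filter_upwards [h0.eventually (eventually_le_nhds (by norm_num : (0:ℝ) < 1/2))] with n hn
      have hcq : ‖-(c * q ^ n)‖ ≤ 1/2 := by
        rw [norm_neg]
        simpa [norm_mul, norm_pow] using hn
      have := Complex.norm_log_one_add_half_le_self hcq
      rw [show (1 : ℂ) + -(c * q ^ n) = 1 - c * q ^ n by ring] at this
      refine this.trans ?_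
      simp [norm_mul, norm_pow]
    exact Complex.multipliable_of_summable_log hlog

lemma tprod_shift {q x : ℂ} (hq : ‖q‖ < 1) :
    ∏' n : ℕ, (1 - q ^ (n + 1) * x) = (1 - q * x) * ∏' n : ℕ, (1 - q ^ (n + 2) * x) := by
  have hm : Multipliable (fun n : ℕ => 1 - q ^ (n + 1 + 1) * x) :=
    (mult_geom hq (q ^ 2 * x)).congr (fun n => by ring)
  rw [tprod_eq_zero_mul' (f := fun n : ℕ => 1 - q ^ (n + 1) * x) hm]
  norm_num

lemma tprod_shift0 {q x : ℂ} (hq : ‖q‖ < 1) :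
    ∏' n : ℕ, (1 - q ^ n * x) = (1 - x) * ∏' n : ℕ, (1 - q ^ (n + 1) * x) := by
  have hm : Multipliable (fun n : ℕ => 1 - q ^ (n + 1) * x) :=
    (mult_geom hq (q * x)).congr (fun n => by ring)
  rw [tprod_eq_zero_mul' (f := fun n : ℕ => 1 - q ^ n * x) hm]
  norm_num

lemma hscalar (τ t q : ℂ) (hq : q = Complex.exp (2 * Real.pi * I * τ)) :
    2 * Complex.sin (Real.pi * (t + τ)) * (1 - Complex.exp (-(2 * Real.pi * I * t))) =
    -Complex.exp (-(Real.pi * I * τ) - 2 * Real.pi * I * t) * (2 * Complex.sin (Real.pi * t)) *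
      (1 - q * Complex.exp (2 * Real.pi * I * t)) := by
  subst hq
  have E : Complex.exp (Real.pi * I * t) ≠ 0 := Complex.exp_ne_zero _
  have T : Complex.exp (Real.pi * I * τ) ≠ 0 := Complex.exp_ne_zero _
  simp only [Complex.sin]
  rw [show -((Real.pi:ℂ) * (t + τ)) * I = -(Real.pi * I * t) + -(Real.pi * I * τ) by ring,
    show ((Real.pi:ℂ) * (t + τ)) * I = Real.pi * I * t + Real.pi * I * τ by ring,
    show -(2 * (Real.pi:ℂ) * I * t) = -(Real.pi * I * t) + -(Real.pi * I * t) by ring,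
    show -((Real.pi:ℂ) * I * τ) - 2 * Real.pi * I * t
      = -(Real.pi * I * τ) + (-(Real.pi * I * t) + -(Real.pi * I * t)) by ring,
    show -((Real.pi:ℂ) * t) * I = -(Real.pi * I * t) by ring,
    show ((Real.pi:ℂ) * t) * I = Real.pi * I * t by ring,
    show 2 * (Real.pi:ℂ) * I * τ = Real.pi * I * τ + Real.pi * I * τ by ring,
    show 2 * (Real.pi:ℂ) * I * t = Real.pi * I * t + Real.pi * I * t by ring]
  simp only [Complex.exp_add, Complex.exp_neg]
  field_simp
  all_goals ring

lemma jq_norm_lt {τ : ℂ} (hτ : 0 < τ.im) : ‖jq τ‖ < 1 := by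
  rw [jq, Complex.norm_exp]
  have hre : (2 * (Real.pi:ℂ) * I * τ).re = -(2 * Real.pi * τ.im) := by
    simp [Complex.mul_re, Complex.mul_im]
  rw [hre]
  apply Real.exp_lt_one_iff.mpr ?_
  have := Real.pi_pos
  nlinarith

lemma th_add_one (τ t : ℂ) : th τ (t + 1) = - th τ t := by
  have h1 : Complex.exp (2 * Real.pi * I * (t + 1)) = Complex.exp (2 * Real.pi * I * t) := by
    rw [show 2 * (Real.pi:ℂ) * I * (t + 1) = 2 * Real.pi * I * t + 2 * Real.pi * I by ring,
      Complex.exp_add, Complex.exp_two_pi_mul_I, mul_one]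
  have h2 : Complex.exp (-(2 * Real.pi * I * (t + 1))) = Complex.exp (-(2 * Real.pi * I * t)) := by
    rw [show -(2 * (Real.pi:ℂ) * I * (t + 1)) = -(2 * Real.pi * I * t) + -(2 * Real.pi * I) by ring,
      Complex.exp_add, show Complex.exp (-(2 * (Real.pi:ℂ) * I)) = 1 by
        rw [Complex.exp_neg, Complex.exp_two_pi_mul_I, inv_one], mul_one]
  have h3 : Complex.sin (Real.pi * (t + 1)) = - Complex.sin (Real.pi * t) := by
    rw [show (Real.pi:ℂ) * (t + 1) = Real.pi * t + Real.pi by ring, Complex.sin_add,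
      Complex.sin_pi, Complex.cos_pi]
    ring
  simp only [th, jTheta, h1, h2, h3]
  ring

lemma th_sub_one (τ s : ℂ) : th τ (s - 1) = - th τ s := by
  have := th_add_one τ (s - 1)
  rw [sub_add_cancel] at this
  rw [this, neg_neg]

lemma th_add_tau (τ : ℂ) (hτ : 0 < τ.im) (t : ℂ) :
    th τ (t + τ) = -Complex.exp (-(Real.pi * I * τ) - 2 * Real.pi * I * t) * th τ t := by
  have hqlt : ‖jq τ‖ < 1 := jq_norm_lt hτ
  have hq0 : jq τ ≠ 0 := Complex.exp_ne_zero _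
  have hexp1 : Complex.exp (2 * Real.pi * I * (t + τ))
      = jq τ * Complex.exp (2 * Real.pi * I * t) := by
    rw [jq, ← Complex.exp_add]; congr 1; ring
  have hexp2 : Complex.exp (-(2 * Real.pi * I * (t + τ)))
      = Complex.exp (-(2 * Real.pi * I * t)) * (jq τ)⁻¹ := by
    rw [jq, ← Complex.exp_neg, ← Complex.exp_add]; congr 1; ring
  set q := jq τ with hqdef
  set u := Complex.exp (2 * Real.pi * I * t) with hu
  set v := Complex.exp (-(2 * Real.pi * I * t)) with hv
  have hf : Multipliable (fun n : ℕ => 1 - q ^ (n + 2) * u) :=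
    (mult_geom hqlt (q ^ 2 * u)).congr (fun n => by ring)
  have hg : Multipliable (fun n : ℕ => 1 - q ^ n * v) :=
    (mult_geom hqlt v).congr (fun n => by ring)
  have hF : Multipliable (fun n : ℕ => 1 - q ^ (n + 1) * u) :=
    (mult_geom hqlt (q * u)).congr (fun n => by ring)
  have hG : Multipliable (fun n : ℕ => 1 - q ^ (n + 1) * v) :=
    (mult_geom hqlt (q * v)).congr (fun n => by ring)
  have hL : (∏' n : ℕ, (1 - q ^ (n + 1) * (q * u)) * (1 - q ^ (n + 1) * (v * q⁻¹)))
      = (∏' n : ℕ, (1 - q ^ (n + 2) * u)) * ((1 - v) * ∏' n : ℕ, (1 - q ^ (n + 1) * v)) := by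
    rw [show (∏' n : ℕ, (1 - q ^ (n + 1) * (q * u)) * (1 - q ^ (n + 1) * (v * q⁻¹)))
        = ∏' n : ℕ, (1 - q ^ (n + 2) * u) * (1 - q ^ n * v) from tprod_congr fun n => by
      rw [show q ^ (n + 1) * (q * u) = q ^ (n + 2) * u by ring,
        show q ^ (n + 1) * (v * q⁻¹) = q ^ n * (q * q⁻¹) * v by ring,
        mul_inv_cancel₀ hq0, mul_one]]
    rw [Multipliable.tprod_mul hf hg, tprod_shift0 hqlt]
  have hR : (∏' n : ℕ, (1 - q ^ (n + 1) * u) * (1 - q ^ (n + 1) * v))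
      = ((1 - q * u) * ∏' n : ℕ, (1 - q ^ (n + 2) * u)) * ∏' n : ℕ, (1 - q ^ (n + 1) * v) := by
    rw [Multipliable.tprod_mul hF hG, tprod_shift hqlt]
  simp only [th, jTheta, hexp1, hexp2]
  rw [hL, hR]
  have hs := hscalar τ t q hqdef
  linear_combination (Complex.exp (Real.pi * I * τ / 4) * (∏' n : ℕ, (1 - q ^ (n + 1))) *
    (∏' n : ℕ, (1 - q ^ (n + 2) * u)) * (∏' n : ℕ, (1 - q ^ (n + 1) * v))) * hs

lemma th_sub_tau (τ : ℂ) (hτ : 0 < τ.im) (s : ℂ) :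
    th τ (s - τ) = -(Complex.exp (-(Real.pi * I * τ) - 2 * Real.pi * I * (s - τ)))⁻¹ * th τ s := by
  have h := th_add_tau τ hτ (s - τ)
  rw [sub_add_cancel] at h
  rw [h]
  have hE : Complex.exp (-(Real.pi * I * τ) - 2 * Real.pi * I * (s - τ)) ≠ 0 :=
    Complex.exp_ne_zero _
  field_simp

lemma step' (c d P Q X Y : ℂ) :
    ((-c * P) * X) / ((-d * Q) * Y) = (c / d) * ((P * X) / (Q * Y)) := by
  rw [show (-c * P) * X = -(c * (P * X)) by ring, show (-d * Q) * Y = -(d * (Q * Y)) by ring,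
    neg_div_neg_eq, mul_div_mul_comm]

lemma step'' (c d P Q X Y : ℂ) :
    ((-(c)⁻¹ * P) * X) / ((-(d)⁻¹ * Q) * Y) = (d / c) * ((P * X) / (Q * Y)) := by
  rw [show (-(c)⁻¹ * P) * X = -((c)⁻¹ * (P * X)) by ring,
    show (-(d)⁻¹ * Q) * Y = -((d)⁻¹ * (Q * Y)) by ring,
    neg_div_neg_eq, mul_div_mul_comm, show c⁻¹ / d⁻¹ = d / c by
      rw [div_eq_mul_inv, inv_inv, mul_comm, ← div_eq_mul_inv]]

/-- `F₂` is doubly periodic with respect to the lattice `ℤ + τℤ`, wherever defined. -/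
theorem F₂_doubly_periodic (τ z a : ℂ) (hτ : 0 < τ.im)
    (hz : ¬ inLat τ z) (h2z : ¬ inLat τ (2 * z)) (haz : ¬ inLat τ ((a + 1) * z))
    (t : ℂ) (ht : ¬ inLat τ t) (htpz : ¬ inLat τ (t + z)) (htmz : ¬ inLat τ (t - z)) :
    F₂ τ z a (t + 1) = F₂ τ z a t ∧ F₂ τ z a (t + τ) = F₂ τ z a t := by
  constructor
  · simp only [F₂]
    rw [show t + 1 + z = (t + z) + 1 by ring, show t + 1 - z = (t - z) + 1 by ring,
      show -(t + 1) + 2 * z = (-t + 2 * z) - 1 by ring,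
      show -(t + 1) + z = (-t + z) - 1 by ring,
      show t + 1 + (a + 1) * z = (t + (a + 1) * z) + 1 by ring,
      show t + 1 - (a + 1) * z = (t - (a + 1) * z) + 1 by ring]
    simp only [th_add_one, th_sub_one]
    ring
  · simp only [F₂]
    rw [show t + τ + z = (t + z) + τ by ring, show t + τ - z = (t - z) + τ by ring,
      show -(t + τ) + 2 * z = (-t + 2 * z) - τ by ring,
      show -(t + τ) + z = (-t + z) - τ by ring,
      show t + τ + (a + 1) * z = (t + (a + 1) * z) + τ by ring,
      show t + τ - (a + 1) * z = (t - (a + 1) * z) + τ by ring]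
    rw [th_add_tau τ hτ (t + z), th_add_tau τ hτ t, th_add_tau τ hτ (t - z),
      th_sub_tau τ hτ (-t + 2 * z), th_sub_tau τ hτ (-t + z),
      th_add_tau τ hτ (t + (a + 1) * z), th_add_tau τ hτ (t - (a + 1) * z)]
    simp only [← Complex.exp_neg]
    simp only [step']
    simp only [← Complex.exp_sub]
    have key : Complex.exp ((-(Real.pi * I * τ) - 2 * Real.pi * I * (t + z))
          - (-(Real.pi * I * τ) - 2 * Real.pi * I * t)) ^ 2 *
        Complex.exp ((-(Real.pi * I * τ) - 2 * Real.pi * I * (t - z))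
          - (-(Real.pi * I * τ) - 2 * Real.pi * I * t)) *
        Complex.exp (-(-(Real.pi * I * τ) - 2 * Real.pi * I * (-t + 2 * z - τ))
          - -(-(Real.pi * I * τ) - 2 * Real.pi * I * (-t + z - τ))) *
        Complex.exp ((-(Real.pi * I * τ) - 2 * Real.pi * I * (t + (a + 1) * z))
          - (-(Real.pi * I * τ) - 2 * Real.pi * I * (t + z))) *
        Complex.exp ((-(Real.pi * I * τ) - 2 * Real.pi * I * (t - (a + 1) * z))
          - (-(Real.pi * I * τ) - 2 * Real.pi * I * (t - z))) = 1 := by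
      rw [sq, ← Complex.exp_add, ← Complex.exp_add, ← Complex.exp_add, ← Complex.exp_add,
        ← Complex.exp_add]
      convert Complex.exp_zero using 2
      ring
    linear_combination ((th τ (t + z) * thd τ / (th τ t * th τ z)) ^ 2 *
      (th τ (t - z) * thd τ / (th τ t * th τ (-z))) *
      (th τ (-t + 2 * z) * th τ z / (th τ (-t + z) * th τ (2 * z))) *
      (th τ (t + (a + 1) * z) * th τ z / (th τ (t + z) * th τ ((a + 1) * z))) *
      (th τ (t - (a + 1) * z) * th τ z / (th τ (t - z) * th τ ((a + 1) * z)))) * key
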